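/- Let f and g be two vectors in ℝ^E indexed by a finite edge set E, and let each l_e : ℝ → ℝ satisfy the inverse-K-continuity condition: (x − y)(l_e(x) − l_e(y)) ≤ ε²/K implies |x − y| ≤ ε for all x, y, ε ≥ 0. Suppose Σ_e (g_e − f_e)·l_e(g_e) ≤ δ and Σ_e (f_e − g_e)·l_e(f_e) ≤ 0, with f_e, g_e ≥ 0 and each l_e monotone increasing. Then for every edge e, |g_e − f_e| ≤ √(K·δ). -/
import Mathlib


/-- Abstract form of Lemma 3.4 (closeness of an approximate equilibrium to the
exact Wardrop equilibrium): if each `l e` is monotone increasing and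
inverse-`K`-continuous, `Σ_e (g_e − f_e)·l_e(g_e) ≤ δ` and
`Σ_e (f_e − g_e)·l_e(f_e) ≤ 0`, then `|g_e − f_e| ≤ √(K·δ)` on every edge. -/
theorem eqbm_close_abstract
    {E : Type*} [Fintype E] (f g : E → ℝ) (l : E → ℝ → ℝ)
    (K δ : ℝ) (hK : 0 < K) (hδ : 0 < δ)
    (hf : ∀ e, 0 ≤ f e) (hg : ∀ e, 0 ≤ g e)
    (hmono : ∀ e, Monotone (l e))
    (hinv : ∀ e, ∀ x y ε : ℝ, 0 ≤ x → 0 ≤ y → 0 ≤ ε →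
      (x - y) * (l e x - l e y) ≤ ε ^ 2 / K → |x - y| ≤ ε)
    (h1 : ∑ e, (g e - f e) * l e (g e) ≤ δ)
    (h2 : ∑ e, (f e - g e) * l e (f e) ≤ 0) :
    ∀ e, |g e - f e| ≤ Real.sqrt (K * δ) := by
  have hterm : ∀ e, 0 ≤ (g e - f e) * (l e (g e) - l e (f e)) := by
    intro e
    rcases le_total (f e) (g e) with h | h
    · exact mul_nonneg (by linarith) (by linarith [hmono e h])
    · have := hmono e h
      nlinarith
  have hsum : ∑ e, (g e - f e) * (l e (g e) - l e (f e)) ≤ δ := by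
    have : ∑ e, (g e - f e) * (l e (g e) - l e (f e)) =
        (∑ e, (g e - f e) * l e (g e)) + ∑ e, (f e - g e) * l e (f e) := by
      rw [← Finset.sum_add_distrib]; congr 1; ext e; ring
    linarith
  intro e
  have hle : (g e - f e) * (l e (g e) - l e (f e)) ≤ δ := by
    calc (g e - f e) * (l e (g e) - l e (f e))
        ≤ ∑ e', (g e' - f e') * (l e' (g e') - l e' (f e')) :=
        Finset.single_le_sum (fun i _ => hterm i) (Finset.mem_univ e)
      _ ≤ δ := hsum
  apply hinv e _ _ _ (hg e) (hf e) (Real.sqrt_nonneg _)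
  rw [Real.sq_sqrt (by positivity)]
  have hKd : K * δ / K = δ := by field_simp
  linarith
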